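/- For every element g of 𝕃(p), at least one of the following holds: 0 ≤ g, or g ≤ c + ω; that is, either g lies in the submonoid P generated by x_1,…,x_t, or (c + ω) − g lies in P, where ω = (t−2)·c − Σ_{i=1}^t x_i. -/

import Mathlib

open scoped TensorProduct

/-- The subgroup of relations `p_i • x_i − c` defining `𝕃(p)` inside the free
abelian group on the generators `x_1,…,x_t` (indexed by `Fin t`) and `c`
(indexed by `Unit`). -/
def Lrel (t : ℕ) (p : Fin t → ℕ) : AddSubgroup (FreeAbelianGroup (Fin t ⊕ Unit)) :=
  AddSubgroup.closure
    {g | ∃ i : Fin t, g = (p i) • FreeAbelianGroup.of (Sum.inl i) -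
        FreeAbelianGroup.of (Sum.inr ())}

/-- The group `𝕃(p)`, presented by generators `x_1,…,x_t,c` and relations
`p_1 x_1 = ⋯ = p_t x_t = c`. -/
abbrev LGroup (t : ℕ) (p : Fin t → ℕ) :=
  FreeAbelianGroup (Fin t ⊕ Unit) ⧸ Lrel t p

/-- The generator `x_i` of `𝕃(p)`. -/
def Lx (t : ℕ) (p : Fin t → ℕ) (i : Fin t) : LGroup t p :=
  QuotientAddGroup.mk (FreeAbelianGroup.of (Sum.inl i))

/-- The canonical element `c` of `𝕃(p)`. -/
def Lc (t : ℕ) (p : Fin t → ℕ) : LGroup t p :=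
  QuotientAddGroup.mk (FreeAbelianGroup.of (Sum.inr ()))

lemma Lpc (t : ℕ) (p : Fin t → ℕ) (i : Fin t) : (p i : ℤ) • Lx t p i = Lc t p := by
  have h : ((p i : ℤ) • FreeAbelianGroup.of (Sum.inl i) : FreeAbelianGroup (Fin t ⊕ Unit)) -
      FreeAbelianGroup.of (Sum.inr ()) ∈ Lrel t p :=
    AddSubgroup.subset_closure ⟨i, by rw [natCast_zsmul]⟩
  rw [Lx, Lc, ← QuotientAddGroup.mk_zsmul]
  exact (QuotientAddGroup.eq_iff_sub_mem).mpr h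

lemma Lrepr (t : ℕ) (p : Fin t → ℕ) (g : LGroup t p) :
    ∃ (a : Fin t → ℤ) (b : ℤ), g = (∑ i, a i • Lx t p i) + b • Lc t p := by
  obtain ⟨x, rfl⟩ := QuotientAddGroup.mk_surjective g
  induction x using FreeAbelianGroup.induction_on with
  | zero => exact ⟨0, 0, by simp⟩
  | of y =>
    rcases y with i | u
    · refine ⟨fun j => if j = i then 1 else 0, 0, ?_⟩
      simp [Lx, ite_smul, Finset.sum_ite_eq']
    · exact ⟨0, 1, by simp [Lc]⟩
  | neg y hy =>
    obtain ⟨a, b, h⟩ := hy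
    refine ⟨-a, -b, ?_⟩
    rw [QuotientAddGroup.mk_neg, h]
    simp [Finset.sum_neg_distrib, neg_smul]
    abel
  | add y z hy hz =>
    obtain ⟨a, b, h⟩ := hy
    obtain ⟨a', b', h'⟩ := hz
    refine ⟨a + a', b + b', ?_⟩
    rw [show (QuotientAddGroup.mk (α := FreeAbelianGroup (Fin t ⊕ Unit)) (s := Lrel t p) (y + z)) = QuotientAddGroup.mk y + QuotientAddGroup.mk z from rfl, h, h']
    simp [add_smul, Finset.sum_add_distrib]
    abel

lemma Lmem (t : ℕ) (p : Fin t → ℕ) (a : Fin t → ℤ) (b : ℤ) (ht : 0 < t)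
    (ha : ∀ i, 0 ≤ a i) (hb : 0 ≤ b) :
    (∑ i, a i • Lx t p i) + b • Lc t p ∈ AddSubmonoid.closure (Set.range (Lx t p)) := by
  have hx : ∀ i, Lx t p i ∈ AddSubmonoid.closure (Set.range (Lx t p)) :=
    fun i => AddSubmonoid.subset_closure ⟨i, rfl⟩
  have hc : Lc t p ∈ AddSubmonoid.closure (Set.range (Lx t p)) := by
    have h0 : (p ⟨0, ht⟩) • Lx t p ⟨0, ht⟩ = Lc t p := by
      rw [← natCast_zsmul]; exact Lpc t p ⟨0, ht⟩
    exact h0 ▸ AddSubmonoid.nsmul_mem _ (hx _) _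
  refine AddSubmonoid.add_mem _ (AddSubmonoid.sum_mem _ fun i _ => ?_) ?_
  · rw [← Int.toNat_of_nonneg (ha i), natCast_zsmul]
    exact AddSubmonoid.nsmul_mem _ (hx i) _
  · rw [← Int.toNat_of_nonneg hb, natCast_zsmul]
    exact AddSubmonoid.nsmul_mem _ hc _

/-- For every `g ∈ 𝕃(p)`, either `0 ≤ g` or `g ≤ c + ω`, i.e. either `g` lies
in the submonoid `P` generated by `x_1,…,x_t`, or `(c + ω) − g ∈ P`, where
`ω = (t−2) • c − ∑ i, x_i` is the dualizing element. -/
theorem le_zero_or_le_c_add_omega (t : ℕ) (ht : 3 ≤ t)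
    (p : Fin t → ℕ) (hp : ∀ i, 0 < p i) (g : LGroup t p) :
    g ∈ AddSubmonoid.closure (Set.range (Lx t p)) ∨
    (Lc t p + (((t : ℤ) - 2) • Lc t p - ∑ i, Lx t p i)) - g ∈
      AddSubmonoid.closure (Set.range (Lx t p)) := by
  obtain ⟨a, b, rfl⟩ := Lrepr t p g
  -- normalize: a i = p i * q i + r i
  set r : Fin t → ℤ := fun i => a i % (p i) with hr
  set q : Fin t → ℤ := fun i => a i / (p i) with hq
  have hrep : (∑ i, a i • Lx t p i) + b • Lc t p
      = (∑ i, r i • Lx t p i) + (b + ∑ i, q i) • Lc t p := by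
    have h1 : ∀ i, a i • Lx t p i = r i • Lx t p i + q i • Lc t p := by
      intro i
      rw [← Lpc t p i, smul_smul, ← add_smul]
      congr 1
      rw [hr, hq]
      have := Int.emod_add_mul_ediv (a i) (p i)
      linarith [this]
    rw [Finset.sum_congr rfl fun i _ => h1 i, Finset.sum_add_distrib, add_smul,
      Finset.sum_smul]
    abel
  rw [hrep]
  set B : ℤ := b + ∑ i, q i with hB
  have hr0 : ∀ i, 0 ≤ r i := fun i => Int.emod_nonneg _ (by exact_mod_cast (hp i).ne')
  have hrlt : ∀ i, r i < p i := fun i => Int.emod_lt_of_pos _ (by exact_mod_cast hp i)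
  rcases le_or_gt 0 B with hb | hb
  · exact Or.inl (Lmem t p r B (by omega) hr0 hb)
  · right
    have key : (Lc t p + (((t : ℤ) - 2) • Lc t p - ∑ i, Lx t p i)) -
        ((∑ i, r i • Lx t p i) + B • Lc t p)
        = (∑ i, ((p i : ℤ) - r i - 1) • Lx t p i) + (-1 - B) • Lc t p := by
      have h2 : (∑ i, ((p i : ℤ) - r i - 1) • Lx t p i)
          = (t : ℤ) • Lc t p - (∑ i, r i • Lx t p i) - ∑ i, Lx t p i := by
        have : ∀ i ∈ Finset.univ, ((p i : ℤ) - r i - 1) • Lx t p i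
            = Lc t p - r i • Lx t p i - Lx t p i := by
          intro i _
          rw [sub_smul, sub_smul, one_smul, Lpc t p i]
        rw [Finset.sum_congr rfl this, Finset.sum_sub_distrib, Finset.sum_sub_distrib,
          Finset.sum_const, Finset.card_fin, ← natCast_zsmul]
      rw [h2]
      module
    rw [key]
    exact Lmem t p _ _ (by omega) (fun i => by have := hrlt i; omega) (by omega)
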